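/- Let 𝒢_n be a simple, verbose ψ-reduction grammar, let φ = λ(T[⇑(S)]) be the template corresponding to the (Lambda) rewriting rule, and let Δ_φ^n be the set of φ-matchings of 𝒢_n. Then a λυ-term t = (λa)[s][s_1]⋯[s_w] satisfies t ↓_{n+1} if and only if there exists a unique term π = (λ(α[⇑(σ)]))[σ_1]⋯[σ_w] ∈ Δ_φ^n such that t ∈ L((λα)[σ][σ_1]⋯[σ_w]). -/
import Mathlib


mutual
/-- λυ-terms in de Bruijn notation, with explicit closures. -/
inductive LTerm : Type
  | idx : Nat → LTerm
  | lam : LTerm → LTerm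
  | app : LTerm → LTerm → LTerm
  | clos : LTerm → LSub → LTerm
  deriving DecidableEq

/-- explicit λυ-substitutions. -/
inductive LSub : Type
  | slash : LTerm → LSub
  | lift : LSub → LSub
  | shift : LSub
  deriving DecidableEq
end

mutual
/-- natural size of a λυ-term: the number of constructors (|idx n| = n+1). -/
def LTerm.size : LTerm → Nat
  | .idx n => n + 1
  | .lam a => 1 + a.size
  | .app a b => 1 + a.size + b.size
  | .clos a s => 1 + a.size + s.size

/-- natural size of a substitution. -/
def LSub.size : LSub → Nat
  | .slash a => 1 + a.size
  | .lift s => 1 + s.size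
  | .shift => 1
end

/-- a λυ-term is pure if it contains no closure; pure terms are exactly the ψ-normal forms. -/
def LTerm.IsPure : LTerm → Prop
  | .idx _ => True
  | .lam a => a.IsPure
  | .app a b => a.IsPure ∧ b.IsPure
  | .clos _ _ => False

/-- one normal-order (leftmost-outermost) ψ-reduction step. -/
inductive NStep : LTerm → LTerm → Prop
  /-- (App) (ab)[s] → a[s](b[s]) -/
  | appS (a b : LTerm) (s : LSub) :
      NStep (.clos (.app a b) s) (.app (.clos a s) (.clos b s))
  /-- (Lambda) (λa)[s] → λ(a[⇑(s)]) -/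
  | lamS (a : LTerm) (s : LSub) :
      NStep (.clos (.lam a) s) (.lam (.clos a (.lift s)))
  /-- (FVar) 0[a/] → a -/
  | fvar (a : LTerm) : NStep (.clos (.idx 0) (.slash a)) a
  /-- (RVar) (S n)[a/] → n -/
  | rvar (n : Nat) (a : LTerm) : NStep (.clos (.idx (n+1)) (.slash a)) (.idx n)
  /-- (FVarLift) 0[⇑(s)] → 0 -/
  | fvarLift (s : LSub) : NStep (.clos (.idx 0) (.lift s)) (.idx 0)
  /-- (RVarLift) (S n)[⇑(s)] → n[s][↑] -/
  | rvarLift (n : Nat) (s : LSub) :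
      NStep (.clos (.idx (n+1)) (.lift s)) (.clos (.clos (.idx n) s) .shift)
  /-- (VarShift) n[↑] → S n -/
  | varShift (n : Nat) : NStep (.clos (.idx n) .shift) (.idx (n+1))
  /-- reduce under an abstraction -/
  | lamCong {a a' : LTerm} : NStep a a' → NStep (.lam a) (.lam a')
  /-- reduce in the left part of an application -/
  | appLeft {a a' : LTerm} (b : LTerm) : NStep a a' → NStep (.app a b) (.app a' b)
  /-- reduce in the right part of an application, provided the left part is normal -/
  | appRight {b b' : LTerm} (a : LTerm) :
      a.IsPure → NStep b b' → NStep (.app a b) (.app a b')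
  /-- reduce in the body of a closure, provided the closure is not itself a ψ-redex,
      i.e. its body is again a closure -/
  | closCong {t t' : LTerm} (s : LSub) :
      (∃ u v, t = LTerm.clos u v) → NStep t t' → NStep (.clos t s) (.clos t' s)

/-- `NormIn t k` : `t` reaches its ψ-normal form in exactly `k` normal-order
ψ-reduction steps (written t ↓_k). -/
inductive NormIn : LTerm → Nat → Prop
  | base {t : LTerm} : t.IsPure → NormIn t 0
  | step {t t' : LTerm} {k : Nat} : NStep t t' → NormIn t' k → NormIn t (k+1)

/-! ## Regular tree grammars over the λυ signature -/

/-- terms over the ranked alphabet of λυ (terminal symbols 0, S, λ, application,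
closure, slash, lift, shift) with variables (non-terminals) in `V`.
Ground terms are `GTerm Empty`. -/
inductive GTerm (V : Type) : Type
  | var : V → GTerm V
  | zero : GTerm V
  | succ : GTerm V → GTerm V
  | lam : GTerm V → GTerm V
  | app : GTerm V → GTerm V → GTerm V
  | clos : GTerm V → GTerm V → GTerm V
  | slash : GTerm V → GTerm V
  | lift : GTerm V → GTerm V
  | shift : GTerm V
  deriving DecidableEq

/-- `Gen P α t` : the ground term `t` is derivable from the term `α` in the
regular tree grammar with production function `P`. -/
inductive Gen {V : Type} (P : V → Set (GTerm V)) : GTerm V → GTerm Empty → Prop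
  | var {X : V} {γ : GTerm V} {t : GTerm Empty} :
      γ ∈ P X → Gen P γ t → Gen P (.var X) t
  | zero : Gen P .zero .zero
  | succ {a t} : Gen P a t → Gen P (.succ a) (.succ t)
  | lam {a t} : Gen P a t → Gen P (.lam a) (.lam t)
  | app {a b t u} : Gen P a t → Gen P b u → Gen P (.app a b) (.app t u)
  | clos {a b t u} : Gen P a t → Gen P b u → Gen P (.clos a b) (.clos t u)
  | slash {a t} : Gen P a t → Gen P (.slash a) (.slash t)
  | lift {a t} : Gen P a t → Gen P (.lift a) (.lift t)
  | shift : Gen P .shift .shift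

/-- the language generated by a term `α` in the grammar with productions `P`. -/
def Lang {V : Type} (P : V → Set (GTerm V)) (α : GTerm V) : Set (GTerm Empty) :=
  {t | Gen P α t}

/-- derivations (parse trees) of a ground term from a term `α`; a grammar is
unambiguous when such derivations are unique. -/
inductive Parse {V : Type} (P : V → Set (GTerm V)) : GTerm V → GTerm Empty → Type
  | var {X : V} {γ : GTerm V} {t : GTerm Empty} :
      γ ∈ P X → Parse P γ t → Parse P (.var X) t
  | zero : Parse P .zero .zero
  | succ {a t} : Parse P a t → Parse P (.succ a) (.succ t)
  | lam {a t} : Parse P a t → Parse P (.lam a) (.lam t)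
  | app {a b t u} : Parse P a t → Parse P b u → Parse P (.app a b) (.app t u)
  | clos {a b t u} : Parse P a t → Parse P b u → Parse P (.clos a b) (.clos t u)
  | slash {a t} : Parse P a t → Parse P (.slash a) (.slash t)
  | lift {a t} : Parse P a t → Parse P (.lift a) (.lift t)
  | shift : Parse P .shift .shift

/-- a non-terminal `X` is unambiguous if every ground term admits at most one
derivation sequence (equivalently, parse tree) from `X`. -/
def Unambiguous {V : Type} (P : V → Set (GTerm V)) (X : V) : Prop :=
  ∀ t : GTerm Empty, Subsingleton (Parse P (.var X) t)

/-- `Occurs X α` : the non-terminal `X` occurs in the term `α`. -/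
def Occurs {V : Type} (X : V) : GTerm V → Prop
  | .var Y => X = Y
  | .zero => False
  | .succ a => Occurs X a
  | .lam a => Occurs X a
  | .app a b => Occurs X a ∨ Occurs X b
  | .clos a b => Occurs X a ∨ Occurs X b
  | .slash a => Occurs X a
  | .lift a => Occurs X a
  | .shift => False

/-- the head of a term `χ[σ_1]⋯[σ_w]` of closure width `w`, namely `χ`. -/
def headOf {V : Type} : GTerm V → GTerm V
  | .clos a _ => headOf a
  | t => t

/-- the closure width of a term: the largest `w` such that the term has the
form `χ[σ_1]⋯[σ_w]`. -/
def closWidth {V : Type} : GTerm V → Nat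
  | .clos a _ => closWidth a + 1
  | _ => 0

/-- a regular tree grammar over the λυ terminal alphabet, with non-terminals
`V`, axiom `ax` and a finite set of productions for each non-terminal. -/
structure RTG (V : Type) where
  ax : V
  prods : V → Set (GTerm V)
  prods_fin : ∀ X, (prods X).Finite

/-- non-terminal symbols of the ψ-reduction grammar 𝒢_n : the standard
non-terminals T, S, N of the grammar Λ of λυ-terms, plus G_0, …, G_n. -/
inductive NT (n : Nat) : Type
  | T : NT n
  | S : NT n
  | N : NT n
  | G : Fin (n+1) → NT n
  deriving DecidableEq

/-- the productions of the standard regular tree grammar Λ of λυ-terms: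
T → N | λT | T T | T[S],  S → T/ | ⇑(S) | ↑,  N → 0 | S N. -/
def lamProds {n : Nat} : NT n → Set (GTerm (NT n))
  | .T => {GTerm.var (NT.N), GTerm.lam (.var .T), GTerm.app (.var .T) (.var .T),
           GTerm.clos (.var .T) (.var .S)}
  | .S => {GTerm.slash (.var .T), GTerm.lift (.var .S), GTerm.shift}
  | .N => {GTerm.zero, GTerm.succ (.var .N)}
  | .G _ => ∅

/-- encoding of de Bruijn indices as ground terms. -/
def encIdx : Nat → GTerm Empty
  | 0 => .zero
  | n+1 => .succ (encIdx n)

mutual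
/-- encoding of λυ-terms as ground terms over the λυ alphabet. -/
def encT : LTerm → GTerm Empty
  | .idx n => encIdx n
  | .lam a => .lam (encT a)
  | .app a b => .app (encT a) (encT b)
  | .clos a s => .clos (encT a) (encS s)

/-- encoding of λυ-substitutions as ground terms over the λυ alphabet. -/
def encS : LSub → GTerm Empty
  | .slash a => .slash (encT a)
  | .lift s => .lift (encS s)
  | .shift => .shift
end

/-- `IsRG n G` : `G` is a ψ-reduction grammar 𝒢_n : a regular tree grammar
over the λυ alphabet with non-terminals T, S, N, G_0, …, G_n, whose axiom is
G_n, whose productions include those of the grammar Λ of λυ-terms, and such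
that each G_k is unambiguous and generates exactly the (encodings of) λυ-terms
ψ-normalising in k normal-order ψ-reduction steps. -/
structure IsRG (n : Nat) (G : RTG (NT n)) : Prop where
  ax_eq : G.ax = NT.G (Fin.last n)
  lambda_sub : ∀ X : NT n, lamProds X ⊆ G.prods X
  unamb : ∀ k : Fin (n+1), Unambiguous G.prods (NT.G k)
  lang : ∀ k : Fin (n+1),
    Lang G.prods (.var (NT.G k)) = {g | ∃ t : LTerm, NormIn t k ∧ encT t = g}

/-- `IsSimple n G` : the ψ-reduction grammar is simple: every self-referencing
production is a production of Λ or has one of the forms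
G_k → λG_k | G_0 G_k | G_k G_0, and every regular (non-self-referencing)
production G_k → α references only the non-terminals T, S, N, G_0, …, G_{k−1}. -/
structure IsSimple (n : Nat) (G : RTG (NT n)) : Prop where
  selfref : ∀ (X : NT n) (α : GTerm (NT n)), α ∈ G.prods X → Occurs X α →
    α ∈ lamProds X ∨
      ∃ k : Fin (n+1), X = NT.G k ∧
        (α = .lam (.var X) ∨ α = .app (.var (NT.G 0)) (.var X) ∨
          α = .app (.var X) (.var (NT.G 0)))
  regular : ∀ (k : Fin (n+1)) (α : GTerm (NT n)),
    α ∈ G.prods (NT.G k) → ¬ Occurs (NT.G k) α →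
      ∀ Y : NT n, Occurs Y α →
        Y = NT.T ∨ Y = NT.S ∨ Y = NT.N ∨ ∃ j : Fin (n+1), Y = NT.G j ∧ (j : ℕ) < (k : ℕ)

/-- `IsVerbose G` : no production has the form X → G_k[σ_1]⋯[σ_w]. -/
def IsVerbose {n : Nat} (G : RTG (NT n)) : Prop :=
  ∀ (X : NT n) (α : GTerm (NT n)), α ∈ G.prods X →
    ∀ k : Fin (n+1), headOf α ≠ .var (NT.G k)

/-- `IsFIP P Π α β` : `Π` is a finite intersection partition of `α` and `β`:
a finite set of terms with pairwise disjoint languages whose union of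
languages equals L(α) ∩ L(β). -/
def IsFIP {V : Type} (P : V → Set (GTerm V)) (Pi : Set (GTerm V)) (α β : GTerm V) : Prop :=
  Pi.Finite ∧
  (∀ π₁ ∈ Pi, ∀ π₂ ∈ Pi, π₁ ≠ π₂ → Lang P π₁ ∩ Lang P π₂ = ∅) ∧
  (⋃ π ∈ Pi, Lang P π) = Lang P α ∩ Lang P β

/-- the template φ = λ(T[⇑(S)]) corresponding to the (Lambda) rewriting rule. -/
def phiLambda (n : Nat) : GTerm (NT n) :=
  .lam (.clos (.var NT.T) (.lift (.var NT.S)))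

/-- `appendS φ i` is the template φ_⟨i⟩, i.e. φ with i copies of [S] appended
to its tail. -/
def appendS {n : Nat} : GTerm (NT n) → Nat → GTerm (NT n)
  | t, 0 => t
  | t, w+1 => .clos (appendS t w) (.var NT.S)

/-- `closList χ [σ_1, …, σ_w]` is the term χ[σ_1]⋯[σ_w]. -/
def closList {V : Type} (t : GTerm V) (l : List (GTerm V)) : GTerm V :=
  l.foldl .clos t

/-- `mkClos a [s_1, …, s_w]` is the λυ-term a[s_1]⋯[s_w]. -/
def mkClos (a : LTerm) (l : List LSub) : LTerm :=
  l.foldl .clos a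

/-! ### Auxiliary lemmas -/

section Aux

open GTerm

theorem closList_cons {V : Type} (v : GTerm V) (h : GTerm V) (l : List (GTerm V)) :
    closList v (h :: l) = closList (.clos v h) l := rfl

theorem closList_append1 {V : Type} (v : GTerm V) (l : List (GTerm V)) (h : GTerm V) :
    closList v (l ++ [h]) = .clos (closList v l) h := by
  simp [closList, List.foldl_append]

theorem mkClos_append1 (a : LTerm) (l : List LSub) (s : LSub) :
    mkClos a (l ++ [s]) = .clos (mkClos a l) s := by
  simp [mkClos, List.foldl_append]

theorem mkClos_mkClos (a : LTerm) (l1 l2 : List LSub) :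
    mkClos (mkClos a l1) l2 = mkClos a (l1 ++ l2) := by
  simp [mkClos, List.foldl_append]

theorem closWidth_closList {V : Type} (l : List (GTerm V)) :
    ∀ v, closWidth (closList v l) = closWidth v + l.length := by
  induction l with
  | nil => intro v; simp [closList]
  | cons h l ih =>
      intro v
      rw [closList_cons, ih]
      simp [closWidth]; omega

theorem headOf_ne_clos {V : Type} (v : GTerm V) : ∀ a b, headOf v ≠ .clos a b := by
  induction v <;> simp_all [headOf]

theorem headOf_closList {V : Type} (l : List (GTerm V)) :
    ∀ v, headOf (closList v l) = headOf v := by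
  induction l with
  | nil => intro v; rfl
  | cons h l ih => intro v; rw [closList_cons, ih]; rfl

theorem headOf_eq_self {V : Type} (v : GTerm V) (hv : ∀ a b, v ≠ .clos a b) :
    headOf v = v := by
  cases v <;> first | rfl | exact absurd rfl (hv _ _)

theorem closWidth_eq_zero {V : Type} (v : GTerm V) (hv : ∀ a b, v ≠ .clos a b) :
    closWidth v = 0 := by
  cases v <;> first | rfl | exact absurd rfl (hv _ _)

/-- the list of substitutions on the closure spine of a term. -/
def closSpine {V : Type} : GTerm V → List (GTerm V)
  | .clos a b => closSpine a ++ [b]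
  | _ => []

theorem closList_headOf_spine {V : Type} (v : GTerm V) :
    closList (headOf v) (closSpine v) = v := by
  induction v with
  | clos a b iha ihb =>
      show closList (headOf a) (closSpine a ++ [b]) = _
      rw [closList_append1, iha]
  | _ => rfl

theorem closSpine_eq_nil {V : Type} (v : GTerm V) (hv : ∀ a b, v ≠ .clos a b) :
    closSpine v = [] := by
  cases v <;> first | rfl | exact absurd rfl (hv _ _)

theorem closSpine_closList {V : Type} (l : List (GTerm V)) :
    ∀ v, closSpine (closList v l) = closSpine v ++ l := by
  induction l with
  | nil => intro v; simp [closList]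
  | cons h l ih => intro v; rw [closList_cons, ih]; simp [closSpine]

theorem appendS_eq_closList {n : Nat} (t : GTerm (NT n)) (w : Nat) :
    appendS t w = closList t (List.replicate w (.var NT.S)) := by
  induction w with
  | zero => rfl
  | succ w ih =>
      rw [List.replicate_succ' (n := w), closList_append1, ← ih]; rfl

theorem encT_mkClos (l : List LSub) : ∀ a, encT (mkClos a l) = closList (encT a) (l.map encS) := by
  induction l with
  | nil => intro a; rfl
  | cons s l ih =>
      intro a
      show encT (mkClos (.clos a s) l) = _
      rw [ih]; rfl

theorem closList_inj {V : Type} (l1 : List (GTerm V)) :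
    ∀ (l2 : List (GTerm V)) (v1 v2 : GTerm V), l1.length = l2.length →
      closList v1 l1 = closList v2 l2 → v1 = v2 ∧ l1 = l2 := by
  induction l1 with
  | nil =>
      intro l2 v1 v2 hlen h
      cases l2 with
      | nil => exact ⟨h, rfl⟩
      | cons _ _ => simp at hlen
  | cons h1 l1 ih =>
      intro l2 v1 v2 hlen h
      cases l2 with
      | nil => simp at hlen
      | cons h2 l2 =>
          rw [closList_cons, closList_cons] at h
          obtain ⟨he, hl⟩ := ih l2 _ _ (by simpa using hlen) h
          cases he
          exact ⟨rfl, by rw [hl]⟩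

end Aux

section Aux2
open GTerm

mutual
/-- decoder for term encodings. -/
def decT : GTerm Empty → Option LTerm
  | .zero => some (.idx 0)
  | .succ g =>
      match decT g with
      | some (.idx n) => some (.idx (n+1))
      | _ => none
  | .lam g => (decT g).map .lam
  | .app g h => do pure (.app (← decT g) (← decT h))
  | .clos g h => do pure (.clos (← decT g) (← decS h))
  | _ => none

/-- decoder for substitution encodings. -/
def decS : GTerm Empty → Option LSub
  | .slash g => (decT g).map .slash
  | .lift g => (decS g).map .lift
  | .shift => some .shift
  | _ => none
end

theorem decT_encIdx (m : Nat) : decT (encIdx m) = some (.idx m) := by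
  induction m with
  | zero => rfl
  | succ m ih => rw [show encIdx (m+1) = .succ (encIdx m) from rfl, decT, ih]

mutual
theorem decT_encT : ∀ t : LTerm, decT (encT t) = some t
  | .idx m => decT_encIdx m
  | .lam a => by rw [show encT (.lam a) = .lam (encT a) from rfl, decT, decT_encT a]; rfl
  | .app a b => by
      rw [show encT (.app a b) = .app (encT a) (encT b) from rfl, decT,
        decT_encT a, decT_encT b]; rfl
  | .clos a s => by
      rw [show encT (.clos a s) = .clos (encT a) (encS s) from rfl, decT,
        decT_encT a, decS_encS s]; rfl

theorem decS_encS : ∀ s : LSub, decS (encS s) = some s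
  | .slash a => by rw [show encS (.slash a) = .slash (encT a) from rfl, decS, decT_encT a]; rfl
  | .lift s => by rw [show encS (.lift s) = .lift (encS s) from rfl, decS, decS_encS s]; rfl
  | .shift => rfl
end

theorem encT_inj {t t' : LTerm} (h : encT t = encT t') : t = t' := by
  have := decT_encT t
  rw [h, decT_encT t'] at this
  exact (Option.some_inj.mp this).symm

/-! Gen utilities -/

theorem gen_closList_mk {V : Type} {P : V → Set (GTerm V)} {l : List (GTerm V)}
    {hs : List (GTerm Empty)} (hf : List.Forall₂ (fun σ h => Gen P σ h) l hs) :
    ∀ {v u}, Gen P v u → Gen P (closList v l) (closList u hs) := by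
  induction hf with
  | nil => intro v u h; exact h
  | cons hg _ ih => intro v u h; exact ih (Gen.clos h hg)

theorem forall₂_append {α β : Type*} {R : α → β → Prop} {l1 l2 u1 u2}
    (h1 : List.Forall₂ R l1 u1) (h2 : List.Forall₂ R l2 u2) :
    List.Forall₂ R (l1 ++ l2) (u1 ++ u2) := by
  induction h1 with
  | nil => exact h2
  | cons h _ ih => exact List.Forall₂.cons h ih

theorem gen_spine {V : Type} {P : V → Set (GTerm V)} :
    ∀ (γ : GTerm V) (g : GTerm Empty), Gen P γ g →
      ∃ u hs, g = closList u hs ∧ hs.length = closWidth γ ∧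
        Gen P (headOf γ) u ∧ List.Forall₂ (fun σ h => Gen P σ h) (closSpine γ) hs := by
  intro γ
  induction γ with
  | clos γ₁ σ ih ihσ =>
      intro g h
      cases h with
      | clos h1 h2 =>
          obtain ⟨u, hs, rfl, hlen, hhead, hf⟩ := ih _ h1
          refine ⟨u, hs ++ [_], (closList_append1 _ _ _).symm, ?_, hhead, ?_⟩
          · simp [closWidth, hlen]
          · exact forall₂_append hf (List.Forall₂.cons h2 List.Forall₂.nil)
  | _ =>
      intro g h
      exact ⟨g, [], rfl, rfl, h, List.Forall₂.nil⟩

theorem gen_closList_decomp {V : Type} {P : V → Set (GTerm V)} {v : GTerm V}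
    (hv : ∀ a b, v ≠ .clos a b) {l : List (GTerm V)} {g : GTerm Empty}
    (h : Gen P (closList v l) g) :
    ∃ u hs, g = closList u hs ∧ hs.length = l.length ∧
      Gen P v u ∧ List.Forall₂ (fun σ h => Gen P σ h) l hs := by
  obtain ⟨u, hs, rfl, hlen, hhead, hf⟩ := gen_spine _ _ h
  rw [closWidth_closList, closWidth_eq_zero v hv] at hlen
  rw [headOf_closList, headOf_eq_self v hv] at hhead
  rw [closSpine_closList, closSpine_eq_nil v hv] at hf
  exact ⟨u, hs, rfl, by simpa using hlen, hhead, by simpa using hf⟩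

theorem gen_parse {V : Type} {P : V → Set (GTerm V)} {α : GTerm V} {g : GTerm Empty}
    (h : Gen P α g) : Nonempty (Parse P α g) := by
  induction h with
  | var hm _ ih => exact ⟨Parse.var hm ih.some⟩
  | zero => exact ⟨Parse.zero⟩
  | succ _ ih => exact ⟨Parse.succ ih.some⟩
  | lam _ ih => exact ⟨Parse.lam ih.some⟩
  | app _ _ ih1 ih2 => exact ⟨Parse.app ih1.some ih2.some⟩
  | clos _ _ ih1 ih2 => exact ⟨Parse.clos ih1.some ih2.some⟩
  | slash _ ih => exact ⟨Parse.slash ih.some⟩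
  | lift _ ih => exact ⟨Parse.lift ih.some⟩
  | shift => exact ⟨Parse.shift⟩

/-- root production extractor for parses from a non-terminal. -/
def rootProd {V : Type} {P : V → Set (GTerm V)} {X : V} {g : GTerm Empty} :
    Parse P (.var X) g → GTerm V
  | .var (γ := γ) _ _ => γ

theorem prod_unique {V : Type} {P : V → Set (GTerm V)} {X : V}
    (hun : Unambiguous P X) {γ₁ γ₂ : GTerm V} (h1 : γ₁ ∈ P X) (h2 : γ₂ ∈ P X)
    {g : GTerm Empty} (hg1 : Gen P γ₁ g) (hg2 : Gen P γ₂ g) : γ₁ = γ₂ := by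
  obtain ⟨p1⟩ := gen_parse hg1
  obtain ⟨p2⟩ := gen_parse hg2
  have := (hun g).allEq (Parse.var h1 p1) (Parse.var h2 p2)
  exact congrArg rootProd this

end Aux2

section Aux3
open GTerm

theorem pure_no_step {t t' : LTerm} (h : NStep t t') (hp : t.IsPure) : False := by
  induction h with
  | lamCong _ ih => exact ih hp
  | appLeft _ _ ih => exact ih hp.1
  | appRight _ _ _ ih => exact ih hp.2
  | closCong _ _ _ ih => exact hp
  | _ => exact hp

theorem nstep_det {t u v : LTerm} (h1 : NStep t u) (h2 : NStep t v) : u = v := by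
  induction h1 generalizing v with
  | appS a b s =>
      cases h2 with
      | appS => rfl
      | closCong _ hex _ => obtain ⟨_, _, hc⟩ := hex; exact absurd hc (by simp)
  | lamS a s =>
      cases h2 with
      | lamS => rfl
      | closCong _ hex _ => obtain ⟨_, _, hc⟩ := hex; exact absurd hc (by simp)
  | fvar a =>
      cases h2 with
      | fvar => rfl
      | closCong _ hex _ => obtain ⟨_, _, hc⟩ := hex; exact absurd hc (by simp)
  | rvar m a =>
      cases h2 with
      | rvar => rfl
      | closCong _ hex _ => obtain ⟨_, _, hc⟩ := hex; exact absurd hc (by simp)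
  | fvarLift s =>
      cases h2 with
      | fvarLift => rfl
      | closCong _ hex _ => obtain ⟨_, _, hc⟩ := hex; exact absurd hc (by simp)
  | rvarLift m s =>
      cases h2 with
      | rvarLift => rfl
      | closCong _ hex _ => obtain ⟨_, _, hc⟩ := hex; exact absurd hc (by simp)
  | varShift m =>
      cases h2 with
      | varShift => rfl
      | closCong _ hex _ => obtain ⟨_, _, hc⟩ := hex; exact absurd hc (by simp)
  | lamCong h ih =>
      cases h2 with
      | lamCong h' => rw [ih h']
  | appLeft b h ih =>
      cases h2 with
      | appLeft _ h' => rw [ih h']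
      | appRight _ hp _ => exact absurd hp (fun hp => pure_no_step (by assumption) hp)
  | appRight a hp h ih =>
      cases h2 with
      | appLeft _ h' => exact absurd hp (fun hp => pure_no_step h' hp)
      | appRight _ _ h' => rw [ih h']
  | closCong s hex h ih =>
      cases h2 with
      | appS => obtain ⟨_, _, hc⟩ := hex; exact absurd hc (by simp)
      | lamS => obtain ⟨_, _, hc⟩ := hex; exact absurd hc (by simp)
      | fvar => obtain ⟨_, _, hc⟩ := hex; exact absurd hc (by simp)
      | rvar => obtain ⟨_, _, hc⟩ := hex; exact absurd hc (by simp)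
      | fvarLift => obtain ⟨_, _, hc⟩ := hex; exact absurd hc (by simp)
      | rvarLift => obtain ⟨_, _, hc⟩ := hex; exact absurd hc (by simp)
      | varShift => obtain ⟨_, _, hc⟩ := hex; exact absurd hc (by simp)
      | closCong _ _ h' => rw [ih h']

theorem mkClos_clos_rooted (l : List LSub) :
    ∀ (a : LTerm) (s : LSub), ∃ u v, mkClos (.clos a s) l = .clos u v := by
  induction l with
  | nil => intro a s; exact ⟨a, s, rfl⟩
  | cons h l ih =>
      intro a s
      exact ih (.clos a s) h

theorem nstep_mkClos (l : List LSub) :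
    ∀ {x x' : LTerm}, (∃ u v, x = .clos u v) → NStep x x' →
      NStep (mkClos x l) (mkClos x' l) := by
  induction l with
  | nil => intro x x' _ h; exact h
  | cons h l ih =>
      intro x x' hex hs
      exact ih ⟨_, _, rfl⟩ (NStep.closCong h hex hs)

theorem first_step (a : LTerm) (s : LSub) (ss : List LSub) :
    NStep (mkClos (.clos (.lam a) s) ss) (mkClos (.lam (.clos a (.lift s))) ss) :=
  nstep_mkClos ss ⟨_, _, rfl⟩ (NStep.lamS a s)

theorem normin_shift (m : Nat) : ∀ j, NormIn (mkClos (.idx j) (List.replicate m .shift)) m := by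
  induction m with
  | zero => intro j; exact NormIn.base trivial
  | succ m ih =>
      intro j
      have hst : NStep (mkClos (.idx j) (List.replicate (m+1) .shift))
          (mkClos (.idx (j+1)) (List.replicate m .shift)) := by
        rw [List.replicate_succ]
        exact nstep_mkClos _ ⟨_, _, rfl⟩ (NStep.varShift j)
      exact NormIn.step hst (ih (j+1))

theorem normin_app_idx {b : LTerm} {k : Nat} (h : NormIn b k) :
    NormIn (.app (.idx 0) b) k := by
  induction h with
  | base hp => exact NormIn.base ⟨trivial, hp⟩
  | step hs _ ih => exact NormIn.step (NStep.appRight _ trivial hs) ih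

theorem normin_lb (m : Nat) :
    ∀ (j : Nat) (l : List LSub) (K : Nat),
      NormIn (mkClos (mkClos (.idx j) (List.replicate m .shift)) l) K → m ≤ K := by
  induction m with
  | zero => omega
  | succ m ih =>
      intro j l K hN
      have heq : mkClos (mkClos (.idx j) (List.replicate (m+1) .shift)) l
          = mkClos (.clos (.idx j) .shift) (List.replicate m .shift ++ l) := by
        rw [List.replicate_succ]
        rw [show mkClos (.idx j) (.shift :: List.replicate m .shift)
          = mkClos (.clos (.idx j) .shift) (List.replicate m .shift) from rfl]
        rw [mkClos_mkClos]
      have hst : NStep (mkClos (mkClos (.idx j) (List.replicate (m+1) .shift)) l)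
          (mkClos (mkClos (.idx (j+1)) (List.replicate m .shift)) l) := by
        rw [heq, mkClos_mkClos]
        exact nstep_mkClos _ ⟨_, _, rfl⟩ (NStep.varShift j)
      cases hN with
      | base hp =>
          rw [heq] at hp
          obtain ⟨u, v, hc⟩ := mkClos_clos_rooted (List.replicate m .shift ++ l) (.idx j) .shift
          rw [hc] at hp
          exact hp.elim
      | step hs hk =>
          have := nstep_det hs hst
          subst this
          exact Nat.succ_le_succ (ih (j+1) l _ hk)

end Aux3

section Aux4
open GTerm

theorem encT_ne_lift (τ : LTerm) : ∀ g, encT τ ≠ .lift g := by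
  cases τ with
  | idx m => cases m <;> simp [encT, encIdx]
  | _ => simp [encT]

theorem encIdx_ne_clos (m : Nat) : ∀ a b, encIdx m ≠ .clos a b := by
  cases m <;> simp [encIdx]

theorem encT_eq_succ {τ : LTerm} {u : GTerm Empty} (h : encT τ = .succ u) :
    ∃ m, u = encIdx m := by
  cases τ with
  | idx m =>
      cases m with
      | zero => simp [encT, encIdx] at h
      | succ m =>
          refine ⟨m, ?_⟩
          simp only [encT, encIdx] at h
          exact (succ.inj h).symm
  | _ => simp [encT] at h

theorem closList_peel (hs : List (GTerm Empty)) :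
    ∀ (v : GTerm Empty) (τ : LTerm), closList v hs = encT τ → ∃ τ', encT τ' = v := by
  induction hs using List.reverseRecOn with
  | nil => intro v τ h; exact ⟨τ, h.symm⟩
  | append_singleton hs h ih =>
      intro v τ heq
      rw [closList_append1] at heq
      cases τ with
      | idx m =>
          exfalso; exact encIdx_ne_clos m _ _ heq.symm
      | clos a s =>
          simp only [encT] at heq
          exact ih v a (clos.inj heq).1
      | _ => simp [encT] at heq

theorem closList_encT_decomp (hs : List (GTerm Empty)) :
    ∀ (x : LTerm) (τ : LTerm), closList (encT x) hs = encT τ → ∃ l, τ = mkClos x l := by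
  induction hs using List.reverseRecOn with
  | nil =>
      intro x τ h
      exact ⟨[], (encT_inj h).symm⟩
  | append_singleton hs h ih =>
      intro x τ heq
      rw [closList_append1] at heq
      cases τ with
      | idx m => exact absurd heq.symm (encIdx_ne_clos m _ _)
      | clos a s =>
          simp only [encT] at heq
          obtain ⟨l, rfl⟩ := ih x a (clos.inj heq).1
          exact ⟨l ++ [s], (mkClos_append1 _ _ _).symm⟩
      | _ => simp [encT] at heq

end Aux4

section Grammar
open GTerm
variable {n : Nat} {G : RTG (NT n)}

theorem encIdx_in_N (hRG : IsRG n G) (m : Nat) : Gen G.prods (.var NT.N) (encIdx m) := by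
  induction m with
  | zero =>
      exact Gen.var (hRG.lambda_sub .N (by simp [lamProds])) Gen.zero
  | succ m ih =>
      exact Gen.var (hRG.lambda_sub .N (by simp [lamProds])) (Gen.succ ih)

mutual
theorem encT_in_T (hRG : IsRG n G) : ∀ t : LTerm, Gen G.prods (.var NT.T) (encT t)
  | .idx m =>
      Gen.var (hRG.lambda_sub .T (by simp [lamProds])) (encIdx_in_N hRG m)
  | .lam a =>
      Gen.var (hRG.lambda_sub .T (by simp [lamProds])) (Gen.lam (encT_in_T hRG a))
  | .app a b =>
      Gen.var (hRG.lambda_sub .T (by simp [lamProds]))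
        (Gen.app (encT_in_T hRG a) (encT_in_T hRG b))
  | .clos a s =>
      Gen.var (hRG.lambda_sub .T (by simp [lamProds]))
        (Gen.clos (encT_in_T hRG a) (encS_in_S hRG s))

theorem encS_in_S (hRG : IsRG n G) : ∀ s : LSub, Gen G.prods (.var NT.S) (encS s)
  | .slash a =>
      Gen.var (hRG.lambda_sub .S (by simp [lamProds])) (Gen.slash (encT_in_T hRG a))
  | .lift s =>
      Gen.var (hRG.lambda_sub .S (by simp [lamProds])) (Gen.lift (encS_in_S hRG s))
  | .shift =>
      Gen.var (hRG.lambda_sub .S (by simp [lamProds])) Gen.shift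
end

theorem forall₂_rep (hRG : IsRG n G) (ss : List LSub) :
    List.Forall₂ (fun σ h => Gen G.prods σ h) (List.replicate ss.length (.var NT.S))
      (ss.map encS) := by
  induction ss with
  | nil => exact List.Forall₂.nil
  | cons s ss ih =>
      rw [List.length_cons, List.replicate_succ, List.map_cons]
      exact List.Forall₂.cons (encS_in_S hRG s) ih

/-- for every non-terminal there is a generated ground term that is not
lam-, clos-, or lift-rooted. -/
theorem witness (hRG : IsRG n G) (X : NT n) :
    ∃ e, Gen G.prods (.var X) e ∧ (∀ a, e ≠ .lam a) ∧ (∀ a b, e ≠ .clos a b) ∧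
      (∀ a, e ≠ .lift a) := by
  cases X with
  | T =>
      exact ⟨.zero, Gen.var (hRG.lambda_sub .T (by simp [lamProds]))
        (Gen.var (hRG.lambda_sub .N (by simp [lamProds])) Gen.zero),
        by simp, by simp, by simp⟩
  | S =>
      exact ⟨.shift, Gen.var (hRG.lambda_sub .S (by simp [lamProds])) Gen.shift,
        by simp, by simp, by simp⟩
  | N =>
      exact ⟨.zero, Gen.var (hRG.lambda_sub .N (by simp [lamProds])) Gen.zero,
        by simp, by simp, by simp⟩
  | G j =>
      by_cases hj : (j : ℕ) = 0
      · refine ⟨.zero, ?_, by simp, by simp, by simp⟩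
        have : GTerm.zero ∈ Lang G.prods (.var (NT.G j)) := by
          rw [hRG.lang j]
          exact ⟨.idx 0, by rw [hj]; exact NormIn.base trivial, rfl⟩
        exact this
      · refine ⟨.app .zero (encT (mkClos (.idx 0) (List.replicate (j : ℕ) .shift))), ?_,
          by simp, by simp, by simp⟩
        have : GTerm.app .zero (encT (mkClos (.idx 0) (List.replicate (j : ℕ) .shift)))
            ∈ Lang G.prods (.var (NT.G j)) := by
          rw [hRG.lang j]
          exact ⟨.app (.idx 0) (mkClos (.idx 0) (List.replicate (j : ℕ) .shift)),
            normin_app_idx (normin_shift _ 0), rfl⟩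
        exact this

end Grammar

section Shape
open GTerm
variable {n : Nat} {G : RTG (NT n)}

theorem shape_lemma (hRG : IsRG n G) (w : Nat) :
    ∀ (π : GTerm (NT n)), (∃ g, Gen G.prods π g) →
      (∀ g, Gen G.prods π g → Gen G.prods (appendS (phiLambda n) w) g) →
      ∃ α σ σs, σs.length = w ∧ π = closList (.lam (.clos α (.lift σ))) σs := by
  induction w with
  | zero =>
      rintro π ⟨g, hg⟩ hsub
      simp only [appendS, phiLambda] at hsub
      cases π with
      | var X =>
          obtain ⟨e, hew, hlam, -, -⟩ := witness hRG X
          cases hsub e hew with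
          | lam _ => exact absurd rfl (hlam _)
      | lam π₁ =>
          cases hg with
          | lam hg₁ =>
          have hbody : ∀ u, Gen G.prods π₁ u →
              Gen G.prods (.clos (.var NT.T) (.lift (.var NT.S))) u := by
            intro u hu
            cases hsub _ (Gen.lam hu) with
            | lam h => exact h
          cases π₁ with
          | var X =>
              obtain ⟨e, hew, -, hclos, -⟩ := witness hRG X
              cases hbody e hew with
              | clos _ _ => exact absurd rfl (hclos _ _)
          | clos α τ =>
              cases hg₁ with
              | clos hα hτ =>
              have hτlift : ∀ h', Gen G.prods τ h' → ∃ x, h' = GTerm.lift x := by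
                intro h' hh'
                cases hbody _ (Gen.clos hα hh') with
                | clos _ hl =>
                    cases hl with
                    | lift _ => exact ⟨_, rfl⟩
              cases τ with
              | lift σ => exact ⟨α, σ, [], rfl, rfl⟩
              | var X =>
                  obtain ⟨e, hew, -, -, hlift⟩ := witness hRG X
                  obtain ⟨x, hx⟩ := hτlift e hew
                  exact absurd hx (hlift x)
              | zero => obtain ⟨x, rfl⟩ := hτlift _ hτ; cases hτ
              | succ _ => obtain ⟨x, rfl⟩ := hτlift _ hτ; cases hτ
              | lam _ => obtain ⟨x, rfl⟩ := hτlift _ hτ; cases hτ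
              | app _ _ => obtain ⟨x, rfl⟩ := hτlift _ hτ; cases hτ
              | clos _ _ => obtain ⟨x, rfl⟩ := hτlift _ hτ; cases hτ
              | slash _ => obtain ⟨x, rfl⟩ := hτlift _ hτ; cases hτ
              | shift => obtain ⟨x, rfl⟩ := hτlift _ hτ; cases hτ
          | zero => cases hbody _ hg₁ with | clos _ _ => cases hg₁
          | succ _ => cases hbody _ hg₁ with | clos _ _ => cases hg₁
          | lam _ => cases hbody _ hg₁ with | clos _ _ => cases hg₁
          | app _ _ => cases hbody _ hg₁ with | clos _ _ => cases hg₁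
          | slash _ => cases hbody _ hg₁ with | clos _ _ => cases hg₁
          | lift _ => cases hbody _ hg₁ with | clos _ _ => cases hg₁
          | shift => cases hbody _ hg₁ with | clos _ _ => cases hg₁
      | zero => cases hsub _ hg with | lam _ => cases hg
      | succ _ => cases hsub _ hg with | lam _ => cases hg
      | app _ _ => cases hsub _ hg with | lam _ => cases hg
      | clos _ _ => cases hsub _ hg with | lam _ => cases hg
      | slash _ => cases hsub _ hg with | lam _ => cases hg
      | lift _ => cases hsub _ hg with | lam _ => cases hg
      | shift => cases hsub _ hg with | lam _ => cases hg
  | succ w ih =>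
      rintro π ⟨g, hg⟩ hsub
      simp only [appendS] at hsub
      cases π with
      | var X =>
          obtain ⟨e, hew, -, hclos, -⟩ := witness hRG X
          cases hsub e hew with
          | clos _ _ => exact absurd rfl (hclos _ _)
      | clos π₁ τ =>
          cases hg with
          | clos h1 h2 =>
          have hsub₁ : ∀ u, Gen G.prods π₁ u → Gen G.prods (appendS (phiLambda n) w) u := by
            intro u hu
            cases hsub _ (Gen.clos hu h2) with
            | clos ha _ => exact ha
          obtain ⟨α, σ, σs, hlen, rfl⟩ := ih π₁ ⟨_, h1⟩ hsub₁
          exact ⟨α, σ, σs ++ [τ], by simp [hlen], (closList_append1 _ _ _).symm⟩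
      | zero => cases hsub _ hg with | clos _ _ => cases hg
      | succ _ => cases hsub _ hg with | clos _ _ => cases hg
      | lam _ => cases hsub _ hg with | clos _ _ => cases hg
      | app _ _ => cases hsub _ hg with | clos _ _ => cases hg
      | slash _ => cases hsub _ hg with | clos _ _ => cases hg
      | lift _ => cases hsub _ hg with | clos _ _ => cases hg
      | shift => cases hsub _ hg with | clos _ _ => cases hg

end Shape

section Key
open GTerm
variable {n : Nat} {G : RTG (NT n)}

theorem mem_lang {V : Type} {P : V → Set (GTerm V)} {α : GTerm V} {g : GTerm Empty} :
    g ∈ Lang P α ↔ Gen P α g := Iff.rfl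

theorem key_decomp {α σ : GTerm (NT n)} {σs : List (GTerm (NT n))}
    {a : LTerm} {s : LSub} {ss : List LSub}
    (hL : Gen G.prods (closList (.clos (.lam α) σ) σs) (encT (mkClos (.clos (.lam a) s) ss))) :
    σs.length = ss.length ∧ Gen G.prods α (encT a) ∧ Gen G.prods σ (encS s) ∧
      List.Forall₂ (fun x h => Gen G.prods x h) σs (ss.map encS) := by
  rw [show closList (GTerm.clos (.lam α) σ) σs = closList (.lam α) (σ :: σs) from rfl] at hL
  obtain ⟨u, hs, heq, hlen, hhead, hf⟩ := gen_closList_decomp (by simp) hL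
  cases hhead with
  | lam hα =>
  rename_i u₁
  rw [encT_mkClos,
    show closList (encT (LTerm.clos (.lam a) s)) (ss.map encS)
      = closList (.lam (encT a)) (encS s :: ss.map encS) from rfl] at heq
  have hw := congrArg closWidth heq
  rw [closWidth_closList, closWidth_closList] at hw
  simp only [closWidth, List.length_cons, List.length_map] at hw
  obtain ⟨hv, hls⟩ := closList_inj _ _ _ _ (by simp at hlen ⊢; omega) heq
  injection hv with hv1
  subst hv1
  rw [← hls] at hf
  cases hf with
  | cons h1 h2 =>
      refine ⟨?_, hα, h1, h2⟩
      simp only [List.length_cons] at hlen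
      have := List.Forall₂.length_eq h2
      simpa using this

theorem key_reassemble {α σ : GTerm (NT n)} {σs : List (GTerm (NT n))}
    {a : LTerm} {s : LSub} {ss : List LSub}
    (h1 : Gen G.prods α (encT a)) (h2 : Gen G.prods σ (encS s))
    (hf : List.Forall₂ (fun x h => Gen G.prods x h) σs (ss.map encS)) :
    Gen G.prods (closList (.lam (.clos α (.lift σ))) σs)
      (encT (mkClos (.lam (.clos a (.lift s))) ss)) := by
  rw [encT_mkClos]
  exact gen_closList_mk hf (Gen.lam (Gen.clos h1 (Gen.lift h2)))

theorem key_reassemble2 {α σ : GTerm (NT n)} {σs : List (GTerm (NT n))}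
    {a : LTerm} {s : LSub} {ss : List LSub}
    (h1 : Gen G.prods α (encT a)) (h2 : Gen G.prods σ (encS s))
    (hf : List.Forall₂ (fun x h => Gen G.prods x h) σs (ss.map encS)) :
    Gen G.prods (closList (.clos (.lam α) σ) σs)
      (encT (mkClos (.clos (.lam a) s) ss)) := by
  rw [encT_mkClos,
    show closList (encT (LTerm.clos (.lam a) s)) (ss.map encS)
      = closList (.lam (encT a)) (encS s :: ss.map encS) from rfl,
    show closList (GTerm.clos (.lam α) σ) σs = closList (.lam α) (σ :: σs) from rfl]
  exact gen_closList_mk (List.Forall₂.cons h2 hf) (Gen.lam h1)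

end Key


/-- Let 𝒢_n be a simple, verbose ψ-reduction grammar, φ = λ(T[⇑(S)]) the
template of the (Lambda) rewriting rule, and Δ_φ^n the set of φ-matchings of
𝒢_n, where the φ-matchings of the right-hand side γ (of closure width w) of a
production G_n → γ form a finite intersection partition Π(γ, φ_⟨w⟩). Then a
λυ-term t = (λa)[s][s_1]⋯[s_w] satisfies t ↓_{n+1} if and only if there is a
unique π = (λ(α[⇑(σ)]))[σ_1]⋯[σ_w] in Δ_φ^n with t ∈ L((λα)[σ][σ_1]⋯[σ_w]). -/
theorem lambda_rule_productions (n : Nat) (G : RTG (NT n))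
    (hRG : IsRG n G) (hSimple : IsSimple n G) (hVerbose : IsVerbose G)
    (Δ : GTerm (NT n) → Set (GTerm (NT n)))
    (hΔ : ∀ γ ∈ G.prods (NT.G (Fin.last n)),
      IsFIP G.prods (Δ γ) γ (appendS (phiLambda n) (closWidth γ)))
    (a : LTerm) (s : LSub) (ss : List LSub) :
    NormIn (mkClos (.clos (.lam a) s) ss) (n+1) ↔
      ∃! π : GTerm (NT n),
        (π ∈ ⋃ γ ∈ G.prods (NT.G (Fin.last n)), Δ γ) ∧
        ∃ (α σ : GTerm (NT n)) (σs : List (GTerm (NT n))),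
          π = closList (.lam (.clos α (.lift σ))) σs ∧
          encT (mkClos (.clos (.lam a) s) ss) ∈
            Lang G.prods (closList (.clos (.lam α) σ) σs) := by
  set t₁ : LTerm := mkClos (.lam (.clos a (.lift s))) ss with ht₁def
  have ht1 : encT t₁
      = closList (.lam (.clos (encT a) (.lift (encS s)))) (ss.map encS) := by
    rw [ht₁def, encT_mkClos]; rfl
  constructor
  · -- forward direction
    intro hN
    cases hN with
    | step hstep hrest =>
    rename_i t'
    have ht' : t' = t₁ := nstep_det hstep (first_step a s ss)
    subst ht'
    -- encT t₁ is generated by G_n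
    have hmem : encT t₁ ∈ Lang G.prods (.var (NT.G (Fin.last n))) := by
      rw [hRG.lang (Fin.last n)]
      exact ⟨t₁, by rw [Fin.val_last]; exact hrest, rfl⟩
    have hgen : Gen G.prods (.var (NT.G (Fin.last n))) (encT t₁) := hmem
    cases hgen with
    | var hγ hg =>
    rename_i γ
    obtain ⟨u, hs, hteq, hlen, hhead, hf⟩ := gen_spine γ _ hg
    have hwidth : ss.length = closWidth u + closWidth γ := by
      have hcw := congrArg closWidth (ht1.symm.trans hteq)
      rw [closWidth_closList, closWidth_closList] at hcw
      simp only [closWidth, List.length_map] at hcw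
      omega
    rcases Nat.eq_zero_or_pos (closWidth u) with hu0 | hupos
    · -- main case: closWidth γ = ss.length
      have hγw : closWidth γ = ss.length := by omega
      have hφ : Gen G.prods (appendS (phiLambda n) ss.length) (encT t₁) := by
        rw [appendS_eq_closList, ht1]
        exact gen_closList_mk (forall₂_rep hRG ss)
          (Gen.lam (Gen.clos (encT_in_T hRG a) (Gen.lift (encS_in_S hRG s))))
      have hfip := (hΔ γ hγ).2.2
      have hint : encT t₁ ∈ Lang G.prods γ
          ∩ Lang G.prods (appendS (phiLambda n) (closWidth γ)) :=
        ⟨hg, by rw [hγw]; exact hφ⟩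
      rw [← hfip] at hint
      obtain ⟨π, hπΔ, hπmem⟩ := Set.mem_iUnion₂.mp hint
      have hsub : ∀ g', Gen G.prods π g' →
          Gen G.prods (appendS (phiLambda n) ss.length) g' := by
        intro g' hg'
        have hin : g' ∈ ⋃ π' ∈ Δ γ, Lang G.prods π' := Set.mem_iUnion₂.mpr ⟨π, hπΔ, hg'⟩
        rw [hfip] at hin
        rw [← hγw]
        exact hin.2
      obtain ⟨α, σ, σs, hσlen, hπeq⟩ := shape_lemma hRG ss.length π ⟨_, hπmem⟩ hsub
      subst hπeq
      -- decompose the derivation of encT t₁ from π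
      have hπmem' : Gen G.prods (closList (.lam (.clos α (.lift σ))) σs) (encT t₁) := hπmem
      obtain ⟨u', hs', heq', hlen', hhead', hf'⟩ :=
        gen_closList_decomp (by simp) hπmem'
      cases hhead' with
      | lam hbody =>
      rename_i u₁
      have heqq : closList (.lam (.clos (encT a) (.lift (encS s)))) (ss.map encS)
          = closList (.lam u₁) hs' := ht1.symm.trans heq'
      obtain ⟨hv, hls⟩ := closList_inj _ _ _ _ (by simp [hσlen, hlen']) heqq
      injection hv with hv1
      subst hv1
      rw [← hls] at hf'
      cases hbody with
      | clos hα hl =>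
      cases hl with
      | lift hσ =>
      -- provide the witness
      refine ⟨closList (.lam (.clos α (.lift σ))) σs,
        ⟨Set.mem_iUnion₂.mpr ⟨γ, hγ, hπΔ⟩, α, σ, σs, rfl, key_reassemble2 hα hσ hf'⟩, ?_⟩
      -- uniqueness
      rintro π' ⟨hπ'U, α', σ', σs', hπ'eq, hLmem'⟩
      subst hπ'eq
      obtain ⟨γ'', hγ'', hπ'Δ⟩ := Set.mem_iUnion₂.mp hπ'U
      obtain ⟨hσ'len, hα', hσ', hf''⟩ := key_decomp hLmem'
      have hπ'gen : Gen G.prods (closList (.lam (.clos α' (.lift σ'))) σs') (encT t₁) :=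
        key_reassemble hα' hσ' hf''
      have ht1in : encT t₁ ∈ ⋃ π'' ∈ Δ γ'', Lang G.prods π'' :=
        Set.mem_iUnion₂.mpr ⟨_, hπ'Δ, hπ'gen⟩
      rw [(hΔ γ'' hγ'').2.2] at ht1in
      have hγeq : γ'' = γ :=
        prod_unique (hRG.unamb (Fin.last n)) hγ'' hγ ht1in.1 hg
      subst hγeq
      by_contra hne
      have hdis := (hΔ γ'' hγ'').2.1 _ hπ'Δ _ hπΔ hne
      have : encT t₁ ∈ Lang G.prods (closList (.lam (.clos α' (.lift σ'))) σs')
          ∩ Lang G.prods (closList (.lam (.clos α (.lift σ))) σs) := ⟨hπ'gen, hπmem⟩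
      rw [hdis] at this
      exact this
    · -- impossible case: closWidth γ < ss.length
      exfalso
      obtain ⟨u₁, u₂, hu⟩ : ∃ u₁ u₂, u = GTerm.clos u₁ u₂ := by
        cases u <;> first | exact ⟨_, _, rfl⟩ | simp [closWidth] at hupos
      -- the head of γ must be a non-terminal
      rcases hX : headOf γ with X | _ | _ | _ | _ | _ | _ | _
      case clos => exact headOf_ne_clos γ _ _ hX
      case zero => rw [hX, hu] at hhead; cases hhead
      case succ => rw [hX, hu] at hhead; cases hhead
      case lam => rw [hX, hu] at hhead; cases hhead
      case app => rw [hX, hu] at hhead; cases hhead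
      case slash => rw [hX, hu] at hhead; cases hhead
      case lift => rw [hX, hu] at hhead; cases hhead
      case shift => rw [hX, hu] at hhead; cases hhead
      case var =>
      rw [hX] at hhead
      have hrepl : ∀ e, Gen G.prods (.var X) e →
          ∃ τ : LTerm, NormIn τ n ∧ encT τ = closList e hs := by
        intro e he
        have hγg : Gen G.prods γ (closList e hs) := by
          rw [← closList_headOf_spine γ, hX]
          exact gen_closList_mk hf he
        have : closList e hs ∈ Lang G.prods (.var (NT.G (Fin.last n))) := Gen.var hγ hγg
        rw [hRG.lang (Fin.last n)] at this
        obtain ⟨τ, hτN, hτe⟩ := this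
        exact ⟨τ, by rwa [Fin.val_last] at hτN, hτe⟩
      cases X with
      | G k => exact hVerbose _ γ hγ k hX
      | T =>
          obtain ⟨τ, hτN, hτe⟩ :=
            hrepl (encT (mkClos (.idx 0) (List.replicate (n+1) .shift)))
              (encT_in_T hRG _)
          obtain ⟨l, rfl⟩ := closList_encT_decomp hs _ τ hτe.symm
          have := normin_lb (n+1) 0 l n hτN
          omega
      | S =>
          obtain ⟨τ, hτN, hτe⟩ := hrepl (.lift u)
            (Gen.var (hRG.lambda_sub .S (by simp [lamProds])) (Gen.lift hhead))
          obtain ⟨τ', hτ'⟩ := closList_peel hs _ τ hτe.symm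
          exact encT_ne_lift τ' u hτ'
      | N =>
          obtain ⟨τ, hτN, hτe⟩ := hrepl (.succ u)
            (Gen.var (hRG.lambda_sub .N (by simp [lamProds])) (Gen.succ hhead))
          obtain ⟨τ', hτ'⟩ := closList_peel hs _ τ hτe.symm
          obtain ⟨m, hm⟩ := encT_eq_succ hτ'
          rw [hu] at hm
          exact encIdx_ne_clos m _ _ hm.symm
  · -- backward direction
    rintro ⟨π, ⟨hπU, α, σ, σs, rfl, hLmem⟩, -⟩
    obtain ⟨γ', hγ', hπΔ'⟩ := Set.mem_iUnion₂.mp hπU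
    obtain ⟨hσlen, hα, hσ, hf⟩ := key_decomp hLmem
    have ht1gen : Gen G.prods (closList (.lam (.clos α (.lift σ))) σs) (encT t₁) :=
      key_reassemble hα hσ hf
    have ht1in : encT t₁ ∈ ⋃ π' ∈ Δ γ', Lang G.prods π' :=
      Set.mem_iUnion₂.mpr ⟨_, hπΔ', ht1gen⟩
    rw [(hΔ γ' hγ').2.2] at ht1in
    have : encT t₁ ∈ Lang G.prods (.var (NT.G (Fin.last n))) := Gen.var hγ' ht1in.1
    rw [hRG.lang (Fin.last n)] at this
    obtain ⟨τ, hτN, hτe⟩ := this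
    have hτt : τ = t₁ := encT_inj hτe
    subst hτt
    rw [Fin.val_last] at hτN
    exact NormIn.step (first_step a s ss) hτN
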